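/- Let A ∈ ℝ^{m×n}, b ∈ ℝᵐ, and let P := { x ∈ ℝⁿ : A x ≤ b }. Let P_I denote the convex hull of P ∩ {0,1}ⁿ. Then P_I ⊆ N₊(P), i.e., every point of the convex hull of the 0-1 vectors of P lies in N₊(P). -/

import Mathlib

open Matrix

/-- Frobenius inner product `A ∙ X := trace(Aᵀ X)`. -/
noncomputable def frob {k : ℕ} (A X : Matrix (Fin k) (Fin k) ℝ) : ℝ :=
  Matrix.trace (Aᵀ * X)

/-- The Lovász–Schrijver set `M₊(P)` for the system `A x ≤ b` (rows `a_iᵀ x ≤ b_i`):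
all positive semidefinite `X ∈ ℝ^{(1+n)×(1+n)}` with `(u_i e_jᵀ) ∙ X ≥ 0`,
`(u_i (e₀ − e_j)ᵀ) ∙ X ≥ 0`, `(e_j (e₀ − e_j)ᵀ) ∙ X = 0` and `(e₀ e₀ᵀ) ∙ X = 1`,
where `u_i := (b_i, −a_i)`. -/
def Mplus {m n : ℕ} (A : Matrix (Fin m) (Fin n) ℝ) (b : Fin m → ℝ) :
    Set (Matrix (Fin (n + 1)) (Fin (n + 1)) ℝ) :=
  {X | X.PosSemidef ∧
    (∀ (i : Fin m) (j : Fin n),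
      0 ≤ frob (Matrix.vecMulVec (Fin.cons (b i) (-(A i))) (Pi.single j.succ 1)) X) ∧
    (∀ (i : Fin m) (j : Fin n),
      0 ≤ frob (Matrix.vecMulVec (Fin.cons (b i) (-(A i)))
        (Pi.single 0 1 - Pi.single j.succ 1)) X) ∧
    (∀ j : Fin n,
      frob (Matrix.vecMulVec (Pi.single j.succ 1)
        (Pi.single 0 1 - Pi.single j.succ 1)) X = 0) ∧
    frob (Matrix.vecMulVec (Pi.single (0 : Fin (n + 1)) (1 : ℝ))
      (Pi.single (0 : Fin (n + 1)) (1 : ℝ))) X = 1}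

/-- The Lovász–Schrijver relaxation
`N₊(P) := { x ∈ ℝⁿ : ∃ X ∈ M₊(P), diag(X) = (1, x) }`. -/
def Nplus {m n : ℕ} (A : Matrix (Fin m) (Fin n) ℝ) (b : Fin m → ℝ) :
    Set (Fin n → ℝ) :=
  {x | ∃ X ∈ Mplus A b, Matrix.diag X = Fin.cons 1 x}

lemma frob_vecMulVec {k : ℕ} (u v y z : Fin k → ℝ) :
    frob (Matrix.vecMulVec u v) (Matrix.vecMulVec y z) = (u ⬝ᵥ y) * (v ⬝ᵥ z) := by
  simp [frob, Matrix.trace, Matrix.mul_apply, vecMulVec_apply, dotProduct,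
    Finset.sum_mul, Finset.mul_sum, Matrix.diag]
  apply Finset.sum_congr rfl; intros; apply Finset.sum_congr rfl; intros; ring

lemma frob_comb {k : ℕ} (M X Y : Matrix (Fin k) (Fin k) ℝ) (a b : ℝ) :
    frob M (a • X + b • Y) = a * frob M X + b * frob M Y := by
  simp [frob, Matrix.mul_add, Matrix.mul_smul, smul_eq_mul]

lemma psd_outer {k : ℕ} (y : Fin k → ℝ) : (Matrix.vecMulVec y y).PosSemidef := by
  rw [posSemidef_iff_dotProduct_mulVec]
  constructor
  · ext i j; simp [Matrix.conjTranspose_apply, vecMulVec_apply, mul_comm]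
  · intro x
    have h : star x ⬝ᵥ (Matrix.vecMulVec y y) *ᵥ x = (y ⬝ᵥ x) * (y ⬝ᵥ x) := by
      simp [Matrix.mulVec, dotProduct, vecMulVec_apply, Finset.mul_sum,
        Finset.sum_mul]
      rw [Finset.sum_comm]
      apply Finset.sum_congr rfl; intros; apply Finset.sum_congr rfl; intros; ring
    rw [h]; exact mul_self_nonneg _

lemma psd_comb {k : ℕ} {X Y : Matrix (Fin k) (Fin k) ℝ} (hX : X.PosSemidef)
    (hY : Y.PosSemidef) {a b : ℝ} (ha : 0 ≤ a) (hb : 0 ≤ b) :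
    (a • X + b • Y).PosSemidef := by
  refine posSemidef_iff_dotProduct_mulVec.mpr ⟨?_, ?_⟩
  · have := hX.1; have := hY.1
    unfold Matrix.IsHermitian at *
    simp_all
  · intro x
    simp only [Matrix.add_mulVec, Matrix.smul_mulVec, dotProduct_add,
      dotProduct_smul, smul_eq_mul]
    exact add_nonneg (mul_nonneg ha (hX.dotProduct_mulVec_nonneg x)) (mul_nonneg hb (hY.dotProduct_mulVec_nonneg x))

lemma cons_dot_cons {n : ℕ} (a c : ℝ) (u w : Fin n → ℝ) :
    (Fin.cons a u : Fin (n+1) → ℝ) ⬝ᵥ (Fin.cons c w) = a * c + u ⬝ᵥ w := by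
  simp [dotProduct, Fin.sum_univ_succ]

lemma single_dot {n : ℕ} (i : Fin n) (v : Fin n → ℝ) :
    (Pi.single i 1 : Fin n → ℝ) ⬝ᵥ v = v i := by
  simp [dotProduct, Pi.single_apply, Finset.sum_ite_eq']

/-- With `P := { x : A x ≤ b }` and `P_I := convexHull (P ∩ {0,1}ⁿ)`, we have
`P_I ⊆ N₊(P)`. -/
theorem PI_subset_Nplus {m n : ℕ} (A : Matrix (Fin m) (Fin n) ℝ) (b : Fin m → ℝ) :
    convexHull ℝ ({x : Fin n → ℝ | ∀ i, ∑ k, A i k * x k ≤ b i} ∩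
        {x | ∀ j, x j = 0 ∨ x j = 1}) ⊆ Nplus A b := by
  apply convexHull_min
  · rintro x ⟨hP, h01⟩
    set y : Fin (n+1) → ℝ := Fin.cons 1 x with hy
    refine ⟨Matrix.vecMulVec y y, ⟨psd_outer y, ?_, ?_, ?_, ?_⟩, ?_⟩
    · intro i j
      rw [frob_vecMulVec, cons_dot_cons, single_dot]
      have h1 : (0:ℝ) ≤ b i * 1 + -A i ⬝ᵥ x := by
        have := hP i
        simp [dotProduct, neg_dotProduct] at *
        linarith [hP i]
      have h2 : (0:ℝ) ≤ y j.succ := by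
        rw [hy, Fin.cons_succ]; rcases h01 j with h | h <;> rw [h] <;> norm_num
      exact mul_nonneg h1 h2
    · intro i j
      rw [frob_vecMulVec, cons_dot_cons, sub_dotProduct, single_dot, single_dot]
      have h1 : (0:ℝ) ≤ b i * 1 + -A i ⬝ᵥ x := by
        simp [dotProduct, neg_dotProduct] at *
        linarith [hP i]
      have h2 : (0:ℝ) ≤ y 0 - y j.succ := by
        rw [hy, Fin.cons_succ, Fin.cons_zero]
        rcases h01 j with h | h <;> rw [h] <;> norm_num
      exact mul_nonneg h1 h2
    · intro j
      rw [frob_vecMulVec, single_dot, sub_dotProduct, single_dot, single_dot, hy,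
        Fin.cons_succ, Fin.cons_zero]
      rcases h01 j with h | h <;> rw [h] <;> ring
    · rw [frob_vecMulVec, single_dot]; simp [hy]
    · funext i
      refine Fin.cases ?_ (fun j => ?_) i
      · simp [Matrix.diag, vecMulVec_apply, hy]
      · simp only [Matrix.diag_apply, vecMulVec_apply, hy, Fin.cons_succ]
        rcases h01 j with h | h <;> rw [h] <;> ring
  · rintro x1 ⟨X1, ⟨hpsd1, hA1, hB1, hC1, hD1⟩, hd1⟩ x2
      ⟨X2, ⟨hpsd2, hA2, hB2, hC2, hD2⟩, hd2⟩ a c ha hc hac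
    refine ⟨a • X1 + c • X2, ⟨psd_comb hpsd1 hpsd2 ha hc, ?_, ?_, ?_, ?_⟩, ?_⟩
    · intro i j; rw [frob_comb]
      exact add_nonneg (mul_nonneg ha (hA1 i j)) (mul_nonneg hc (hA2 i j))
    · intro i j; rw [frob_comb]
      exact add_nonneg (mul_nonneg ha (hB1 i j)) (mul_nonneg hc (hB2 i j))
    · intro j; rw [frob_comb, hC1 j, hC2 j]; ring
    · rw [frob_comb, hD1, hD2]; linarith
    · funext i
      refine Fin.cases ?_ (fun j => ?_) i
      · have e1 := congrFun hd1 0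
        have e2 := congrFun hd2 0
        simp only [Matrix.diag_apply, Fin.cons_zero] at e1 e2
        simp only [Matrix.diag_apply, Matrix.add_apply, Matrix.smul_apply,
          smul_eq_mul, e1, e2, Fin.cons_zero, mul_one]
        exact hac
      · have e1 := congrFun hd1 j.succ
        have e2 := congrFun hd2 j.succ
        simp only [Matrix.diag_apply, Fin.cons_succ] at e1 e2
        simp [Matrix.diag_apply, e1, e2]
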